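/- Example 1.1, regularity and exterior equation: The function u is continuously differentiable on ℝ with u'(w) = u'(−w) = 0, and for every x with |x| > w, u''(x) + 2 tanh(x) u'(x) + (1 + 2/cosh²(x)) u(x) = 0 (equivalently, u'' + (2 tanh(x) u)' + u = 0 outside [−w, w]). -/

import Mathlib

open MeasureTheory Set Filter Topology

noncomputable section

/-- `w = log(1 + √2)`. -/
noncomputable def exW : ℝ := Real.log (1 + Real.sqrt 2)

/-- `h = 1/(2(w + √2))`. -/
noncomputable def exH : ℝ := 1 / (2 * (exW + Real.sqrt 2))

/-- The flat-top stationary profile of Example 1.1. -/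
noncomputable def exU (x : ℝ) : ℝ :=
  if |x| ≤ exW then exH else 2 * exH * Real.sinh |x| / (Real.cosh |x|) ^ 2

/-- the smooth outer profile -/
noncomputable def exPhi (x : ℝ) : ℝ := 2 * exH * Real.sinh x / (Real.cosh x) ^ 2

/-- its derivative -/
noncomputable def exPhi' (x : ℝ) : ℝ := 2 * exH * (1 - (Real.sinh x) ^ 2) / (Real.cosh x) ^ 3

/-- the candidate derivative of `exU` -/
noncomputable def exV (x : ℝ) : ℝ :=
  if |x| ≤ exW then 0 else if x < 0 then -exPhi' x else exPhi' x

lemma cosh_ne (x : ℝ) : Real.cosh x ≠ 0 := (Real.cosh_pos (x := x)).ne'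

lemma sqrt2_pos : (0:ℝ) < Real.sqrt 2 := Real.sqrt_pos.mpr two_pos

lemma sinh_exW : Real.sinh exW = 1 := by
  rw [exW, Real.sinh_log (by positivity)]
  have h2 : Real.sqrt 2 ^ 2 = 2 := Real.sq_sqrt (by norm_num)
  have h1 : (1 + Real.sqrt 2) ≠ 0 := by positivity
  field_simp
  nlinarith [h2]

lemma cosh_exW_sq : Real.cosh exW ^ 2 = 2 := by
  have := Real.cosh_sq_sub_sinh_sq exW
  rw [sinh_exW] at this; linarith

lemma exW_pos : 0 < exW := by
  rw [exW]; apply Real.log_pos; nlinarith [sqrt2_pos]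

lemma hasDerivAt_phi (x : ℝ) : HasDerivAt exPhi (exPhi' x) x := by
  have h := ((Real.hasDerivAt_sinh x).const_mul (2 * exH)).div
    ((Real.hasDerivAt_cosh x).pow 2) (pow_ne_zero 2 (cosh_ne x))
  refine HasDerivAt.congr_deriv h ?_
  symm
  simp only [Pi.pow_apply, exPhi']
  have hc := cosh_ne x
  have hid := Real.cosh_sq_sub_sinh_sq x
  field_simp [exPhi']
  linear_combination (-(exH*Real.cosh x)) * hid

lemma hasDerivAt_phi' (x : ℝ) :
    HasDerivAt exPhi' (2 * exH * Real.sinh x * ((Real.cosh x) ^ 2 - 6) / (Real.cosh x) ^ 4) x := by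
  have h := ((((Real.hasDerivAt_sinh x).pow 2).const_sub 1).const_mul (2 * exH)).div
    ((Real.hasDerivAt_cosh x).pow 3) (pow_ne_zero 3 (cosh_ne x))
  refine HasDerivAt.congr_deriv h ?_
  symm
  simp only [Pi.pow_apply]
  have hc := cosh_ne x
  have hid := Real.cosh_sq_sub_sinh_sq x
  field_simp
  linear_combination (3*exH*Real.sinh x*Real.cosh x^2) * hid

lemma phi_exW : exPhi exW = exH := by
  rw [exPhi, sinh_exW, cosh_exW_sq]; ring

lemma phi'_exW : exPhi' exW = 0 := by
  rw [exPhi', sinh_exW]; ring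

lemma phi'_even (x : ℝ) : exPhi' (-x) = exPhi' x := by
  simp [exPhi']

lemma exU_even (x : ℝ) : exU (-x) = exU x := by simp [exU]

lemma exU_eq_of_gt {x : ℝ} (hx : exW < x) : exU x = exPhi x := by
  have h0 : 0 < x := exW_pos.trans hx
  rw [exU, exPhi, if_neg (by rw [abs_of_pos h0]; exact not_le.mpr hx), abs_of_pos h0]

lemma exU_eq_of_lt {x : ℝ} (hx : x < -exW) : exU x = -exPhi x := by
  have h0 : x < 0 := by linarith [exW_pos]
  rw [exU, exPhi, if_neg (by rw [abs_of_neg h0]; intro h; linarith), abs_of_neg h0]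
  rw [Real.sinh_neg, Real.cosh_neg]
  ring

lemma exU_eq_of_mem {x : ℝ} (hx : |x| ≤ exW) : exU x = exH := if_pos hx

lemma exV_eq_of_gt {x : ℝ} (hx : exW < x) : exV x = exPhi' x := by
  have h0 : 0 < x := exW_pos.trans hx
  rw [exV, if_neg (by rw [abs_of_pos h0]; exact not_le.mpr hx), if_neg (by linarith)]

lemma exV_eq_of_lt {x : ℝ} (hx : x < -exW) : exV x = -exPhi' x := by
  have h0 : x < 0 := by linarith [exW_pos]
  rw [exV, if_neg (by rw [abs_of_neg h0]; intro h; linarith), if_pos h0]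

lemma exV_abs_le (x : ℝ) : |exV x| ≤ |exPhi' x| := by
  rw [exV]
  split_ifs with h1 h2
  · simp
  · simp
  · simp

lemma exIsOpen_gt : IsOpen {y : ℝ | exW < y} := isOpen_lt continuous_const continuous_id
lemma exIsOpen_lt : IsOpen {y : ℝ | y < -exW} := isOpen_lt continuous_id continuous_const
lemma exIsOpen_mid : IsOpen {y : ℝ | |y| < exW} := isOpen_lt continuous_abs continuous_const

lemma exU_evgt {x : ℝ} (hx : exW < x) : exU =ᶠ[𝓝 x] exPhi :=
  eventually_of_mem (exIsOpen_gt.mem_nhds hx) fun _ hy => exU_eq_of_gt hy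

lemma exU_evlt {x : ℝ} (hx : x < -exW) : exU =ᶠ[𝓝 x] fun y => -exPhi y :=
  eventually_of_mem (exIsOpen_lt.mem_nhds hx) fun _ hy => exU_eq_of_lt hy

lemma exV_evgt {x : ℝ} (hx : exW < x) : exV =ᶠ[𝓝 x] exPhi' :=
  eventually_of_mem (exIsOpen_gt.mem_nhds hx) fun _ hy => exV_eq_of_gt hy

lemma exV_evlt {x : ℝ} (hx : x < -exW) : exV =ᶠ[𝓝 x] fun y => -exPhi' y :=
  eventually_of_mem (exIsOpen_lt.mem_nhds hx) fun _ hy => exV_eq_of_lt hy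

lemma exU_evmid {x : ℝ} (hx : |x| < exW) : exU =ᶠ[𝓝 x] fun _ => exH :=
  eventually_of_mem (exIsOpen_mid.mem_nhds hx) fun _ hy => exU_eq_of_mem (le_of_lt hy)

lemma exU_exW : exU exW = exH := exU_eq_of_mem (by rw [abs_of_pos exW_pos])

lemma hasDerivAt_exU_exW : HasDerivAt exU 0 exW := by
  rw [hasDerivAt_iff_tendsto_slope]
  have hphi : Filter.Tendsto (slope exPhi exW) (𝓝[≠] exW) (𝓝 0) := by
    have h := hasDerivAt_phi exW
    rw [phi'_exW] at h
    exact hasDerivAt_iff_tendsto_slope.mp h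
  have habs : Filter.Tendsto (fun y => |slope exPhi exW y|) (𝓝[≠] exW) (𝓝 0) := by
    have := hphi.abs; simpa using this
  apply squeeze_zero_norm' _ habs
  have hmem : {y : ℝ | 0 < y} ∈ 𝓝[≠] exW :=
    nhdsWithin_le_nhds ((isOpen_lt continuous_const continuous_id).mem_nhds exW_pos)
  filter_upwards [hmem] with y hy
  simp only [Real.norm_eq_abs, slope_def_field, div_eq_mul_inv]
  rw [abs_mul, abs_mul]
  apply mul_le_mul_of_nonneg_right _ (abs_nonneg _)
  rcases le_or_gt y exW with h | h
  · rw [exU_eq_of_mem (by rw [abs_of_pos hy]; exact h), exU_exW]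
    simp [abs_nonneg]
  · rw [exU_eq_of_gt h, exU_exW, ← phi_exW]

lemma hasDerivAt_exU (x : ℝ) : HasDerivAt exU (exV x) x := by
  rcases lt_trichotomy (|x|) exW with h | h | h
  · rw [exV, if_pos h.le]
    exact (hasDerivAt_const x exH).congr_of_eventuallyEq (exU_evmid h)
  · rcases (abs_eq (le_of_lt exW_pos)).mp h with rfl | rfl
    · rw [exV, if_pos h.le]; exact hasDerivAt_exU_exW
    · rw [exV, if_pos h.le]
      have hneg : HasDerivAt (exU ∘ fun y : ℝ => -y) (0 * (-1)) (-exW) :=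
        HasDerivAt.comp (-exW) (by rw [neg_neg]; exact hasDerivAt_exU_exW) (hasDerivAt_neg (-exW))
      have heq : exU ∘ (fun y : ℝ => -y) = exU := funext fun y => exU_even y
      rw [heq] at hneg
      simpa using hneg
  · rcases lt_abs.mp h with h' | h'
    · rw [exV_eq_of_gt h']
      exact (hasDerivAt_phi x).congr_of_eventuallyEq (exU_evgt h')
    · have h2 : x < -exW := by linarith
      rw [exV_eq_of_lt h2]
      exact ((hasDerivAt_phi x).neg).congr_of_eventuallyEq (exU_evlt h2)

lemma continuous_phi' : Continuous exPhi' :=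
  continuous_iff_continuousAt.mpr fun x => (hasDerivAt_phi' x).continuousAt

lemma continuous_exV : Continuous exV := by
  rw [continuous_iff_continuousAt]
  intro x
  rcases lt_trichotomy (|x|) exW with h | h | h
  · have hev : exV =ᶠ[𝓝 x] fun _ => (0:ℝ) :=
      eventually_of_mem (exIsOpen_mid.mem_nhds h) fun y hy => by rw [exV, if_pos (le_of_lt hy)]
    exact hev.continuousAt
  · have hx0 : exV x = 0 := by rw [exV, if_pos h.le]
    rw [ContinuousAt, hx0]
    have hp : exPhi' x = 0 := by
      rcases (abs_eq (le_of_lt exW_pos)).mp h with rfl | rfl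
      · exact phi'_exW
      · rw [phi'_even]; exact phi'_exW
    have habs : Filter.Tendsto (fun y => |exPhi' y|) (𝓝 x) (𝓝 (|exPhi' x|)) :=
      (continuous_phi'.abs).continuousAt
    rw [hp, abs_zero] at habs
    exact squeeze_zero_norm (fun y => exV_abs_le y) habs
  · rcases lt_abs.mp h with h' | h'
    · exact (continuous_phi'.continuousAt).congr (exV_evgt h').symm
    · have h2 : x < -exW := by linarith
      exact ((continuous_phi'.neg).continuousAt).congr (exV_evlt h2).symm

lemma deriv_exU : deriv exU = exV := funext fun x => (hasDerivAt_exU x).deriv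

lemma ode_phi (x : ℝ) :
    2 * exH * Real.sinh x * ((Real.cosh x) ^ 2 - 6) / (Real.cosh x) ^ 4
      + 2 * Real.tanh x * exPhi' x + (1 + 2 / (Real.cosh x) ^ 2) * exPhi x = 0 := by
  have hc := cosh_ne x
  have hid := Real.cosh_sq_sub_sinh_sq x
  rw [Real.tanh_eq_sinh_div_cosh, exPhi', exPhi]
  field_simp
  linear_combination (4*exH*Real.sinh x) * hid

/-- Example 1.1, regularity and exterior equation: `u` is `C¹` on `ℝ`, `u'(±w) = 0`, and
`u'' + 2 tanh(x) u' + (1 + 2/cosh²x) u = 0` for `|x| > w`. -/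
theorem stmt14 :
    ContDiff ℝ 1 exU ∧
    deriv exU exW = 0 ∧ deriv exU (-exW) = 0 ∧
    (∀ x : ℝ, exW < |x| →
      deriv (deriv exU) x + 2 * Real.tanh x * deriv exU x
        + (1 + 2 / (Real.cosh x) ^ 2) * exU x = 0) := by
  have hdiff : Differentiable ℝ exU := fun x => (hasDerivAt_exU x).differentiableAt
  refine ⟨?_, ?_, ?_, ?_⟩
  · rw [contDiff_one_iff_deriv]
    exact ⟨hdiff, deriv_exU ▸ continuous_exV⟩
  · rw [deriv_exU, exV, if_pos (le_of_eq (abs_of_pos exW_pos))]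
  · rw [deriv_exU, exV, if_pos (le_of_eq (by rw [abs_neg, abs_of_pos exW_pos]))]
  · intro x hx
    rw [deriv_exU]
    rcases lt_abs.mp hx with h | h
    · rw [exV_eq_of_gt h, exU_eq_of_gt h, (exV_evgt h).deriv_eq, (hasDerivAt_phi' x).deriv]
      exact ode_phi x
    · have h' : x < -exW := by linarith
      rw [exV_eq_of_lt h', exU_eq_of_lt h', (exV_evlt h').deriv_eq]
      have hd : deriv (fun y => -exPhi' y) x
          = -(2 * exH * Real.sinh x * ((Real.cosh x) ^ 2 - 6) / (Real.cosh x) ^ 4) :=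
        ((hasDerivAt_phi' x).neg).deriv
      rw [hd]
      linear_combination -(ode_phi x)

end
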